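/- For every positive integer ℓ there exists C > 0 such that for all positive integers k, |∫₀¹ t² sin(kπt) sin(ℓπt) dt| ≥ C/k³. -/

import Mathlib

open Real

lemma integral_sq_cos (c : ℝ) (hc : c ≠ 0) :
    ∫ t in (0:ℝ)..1, t ^ 2 * Real.cos (c * t)
      = Real.sin c / c + 2 * Real.cos c / c ^ 2 - 2 * Real.sin c / c ^ 3 := by
  have h : ∀ t ∈ Set.uIcc (0:ℝ) 1, HasDerivAt
      (fun t : ℝ => t ^ 2 * Real.sin (c * t) / c + 2 * t * Real.cos (c * t) / c ^ 2
        - 2 * Real.sin (c * t) / c ^ 3)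
      (t ^ 2 * Real.cos (c * t)) t := by
    intro t _
    have hs : HasDerivAt (fun t : ℝ => Real.sin (c * t)) (Real.cos (c * t) * c) t := by
      have := (Real.hasDerivAt_sin (c * t)).comp t ((hasDerivAt_id t).const_mul c)
      simp only [mul_one] at this
      exact this
    have hco : HasDerivAt (fun t : ℝ => Real.cos (c * t)) (-Real.sin (c * t) * c) t := by
      have := (Real.hasDerivAt_cos (c * t)).comp t ((hasDerivAt_id t).const_mul c)
      simp only [mul_one] at this
      exact this
    have h1 := (((hasDerivAt_pow 2 t).mul hs).div_const c).add
      ((((hasDerivAt_id t).const_mul 2).mul hco).div_const (c ^ 2))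
    have h2 := h1.sub ((hs.const_mul 2).div_const (c ^ 3))
    refine h2.congr_deriv ?_
    field_simp
    simp only [id]
    ring
  rw [intervalIntegral.integral_eq_sub_of_hasDerivAt h
    (by apply Continuous.intervalIntegrable; fun_prop)]
  norm_num

lemma cos_int_pi (n : ℤ) : Real.cos (n * π) = (-1) ^ n := by
  have := Real.cos_int_mul_pi_sub 0 n
  simpa using this

lemma integral_sq_cos_int (n : ℤ) (hn : n ≠ 0) :
    ∫ t in (0:ℝ)..1, t ^ 2 * Real.cos ((n : ℝ) * π * t)
      = 2 * (-1) ^ n / ((n : ℝ) ^ 2 * π ^ 2) := by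
  have hc : (n : ℝ) * π ≠ 0 :=
    mul_ne_zero (Int.cast_ne_zero.mpr hn) Real.pi_ne_zero
  rw [integral_sq_cos _ hc, Real.sin_int_mul_pi, cos_int_pi]
  field_simp
  ring

theorem stmt_13 (ℓ : ℕ) (hℓ : 1 ≤ ℓ) :
    ∃ C : ℝ, 0 < C ∧ ∀ k : ℕ, 1 ≤ k →
      |∫ t in (0:ℝ)..1, t ^ 2 * Real.sin (k * π * t) * Real.sin (ℓ * π * t)| ≥
        C / (k : ℝ) ^ 3 := by
  have hπ := Real.pi_gt_three
  have hπ2 : (9:ℝ) < π ^ 2 := by nlinarith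
  have hπ0 : (0:ℝ) < π ^ 2 := by positivity
  have hℓR : (1:ℝ) ≤ (ℓ:ℝ) := by exact_mod_cast hℓ
  set C : ℝ := min (1 / ((ℓ:ℝ) ^ 3 * π ^ 2)) (1/6 - 1/(4 * (ℓ:ℝ) ^ 2 * π ^ 2)) with hC
  have hℓpos : (1:ℝ)/6 - 1/(4 * (ℓ:ℝ) ^ 2 * π ^ 2) > 0 := by
    rw [gt_iff_lt, sub_pos, div_lt_div_iff₀ (by positivity) (by norm_num)]
    nlinarith [sq_nonneg ((ℓ:ℝ) - 1)]
  have hCpos : 0 < C := lt_min (by positivity) hℓpos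
  refine ⟨C, hCpos, ?_⟩
  intro k hk
  have hkR : (1:ℝ) ≤ (k:ℝ) := by exact_mod_cast hk
  have key : ∫ t in (0:ℝ)..1, t ^ 2 * Real.sin (k * π * t) * Real.sin (ℓ * π * t)
      = ((∫ t in (0:ℝ)..1, t ^ 2 * Real.cos ((((k:ℤ) - ℓ : ℤ) : ℝ) * π * t))
        - ∫ t in (0:ℝ)..1, t ^ 2 * Real.cos ((((k:ℤ) + ℓ : ℤ) : ℝ) * π * t)) / 2 := by
    rw [← intervalIntegral.integral_sub (by apply Continuous.intervalIntegrable; fun_prop)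
        (by apply Continuous.intervalIntegrable; fun_prop), ← intervalIntegral.integral_div]
    apply intervalIntegral.integral_congr
    intro t _
    push_cast
    rw [show ((k:ℝ) - ℓ) * π * t = k * π * t - ℓ * π * t by ring,
        show ((k:ℝ) + ℓ) * π * t = k * π * t + ℓ * π * t by ring,
        Real.cos_sub, Real.cos_add]
    ring
  by_cases hkl : k = ℓ
  · subst hkl
    have h0 : ((k:ℤ) - k) = 0 := by ring
    rw [key, h0]
    have h1 : ∫ t in (0:ℝ)..1, t ^ 2 * Real.cos (((0:ℤ) : ℝ) * π * t) = 1/3 := by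
      simp
      norm_num
    rw [h1, integral_sq_cos_int _ (by omega)]
    have hkk : ((-1:ℝ)) ^ ((k:ℤ) + k) = 1 := by
      rw [show (k:ℤ) + k = 2 * k by ring, zpow_mul]
      norm_num
    push_cast
    rw [hkk]
    have hval : (1/3 - 2 * 1 / (((k:ℝ) + k) ^ 2 * π ^ 2)) / 2
        = 1/6 - 1/(4 * (k:ℝ) ^ 2 * π ^ 2) := by
      have hk0 : (k:ℝ) ≠ 0 := by positivity
      field_simp
      ring
    rw [hval, abs_of_pos hℓpos]
    calc C / (k:ℝ) ^ 3 ≤ C := by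
          apply div_le_self hCpos.le
          nlinarith
      _ ≤ _ := min_le_right _ _
  · -- k ≠ ℓ
    have hne : ((k:ℤ) - ℓ) ≠ 0 := by
      intro h; apply hkl; omega
    rw [key, integral_sq_cos_int _ hne, integral_sq_cos_int _ (by positivity)]
    have hsgn : ((-1:ℝ)) ^ ((k:ℤ) + ℓ) = ((-1:ℝ)) ^ ((k:ℤ) - ℓ) := by
      rw [show (k:ℤ) + ℓ = ((k:ℤ) - ℓ) + 2 * ℓ by ring, zpow_add₀ (by norm_num), zpow_mul]
      norm_num
    rw [hsgn]
    set ε : ℝ := ((-1:ℝ)) ^ ((k:ℤ) - ℓ) with hεdef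
    set a : ℝ := (((k:ℤ) - ℓ : ℤ) : ℝ) with ha
    set b : ℝ := (((k:ℤ) + ℓ : ℤ) : ℝ) with hb
    have hbval : b = (k:ℝ) + ℓ := by rw [hb]; push_cast; ring
    have hane : a ≠ 0 := Int.cast_ne_zero.mpr hne
    have ha2pos : 0 < a ^ 2 := by
      have := abs_pos.mpr hane
      nlinarith [sq_abs a]
    have hbpos : (0:ℝ) < b := by rw [hbval]; positivity
    have hkZ : (1:ℤ) ≤ (k:ℤ) := by exact_mod_cast hk
    have hℓZ : (1:ℤ) ≤ (ℓ:ℤ) := by exact_mod_cast hℓ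
    have haabs : |a| ≤ (k:ℝ) * ℓ := by
      rw [ha, ← Int.cast_abs]
      have h1 : |(k:ℤ) - ℓ| ≤ (k:ℤ) * ℓ := by
        rcases abs_cases ((k:ℤ) - ℓ) with ⟨h, _⟩ | ⟨h, _⟩ <;> rw [h] <;> nlinarith
      exact_mod_cast h1
    have ha2 : a ^ 2 ≤ (k:ℝ) ^ 2 * (ℓ:ℝ) ^ 2 := by
      calc a ^ 2 = |a| ^ 2 := (sq_abs a).symm
        _ ≤ ((k:ℝ) * ℓ) ^ 2 := pow_le_pow_left₀ (abs_nonneg a) haabs 2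
        _ = (k:ℝ) ^ 2 * (ℓ:ℝ) ^ 2 := by ring
    have hb2 : b ^ 2 ≤ 4 * (k:ℝ) ^ 2 * (ℓ:ℝ) ^ 2 := by
      have h2kl : (k:ℝ) + ℓ ≤ 2 * k * ℓ := by nlinarith
      calc b ^ 2 ≤ (2 * (k:ℝ) * ℓ) ^ 2 := by
            rw [hbval]; exact pow_le_pow_left₀ (by positivity) h2kl 2
        _ = 4 * (k:ℝ) ^ 2 * (ℓ:ℝ) ^ 2 := by ring
    have hdiff : b ^ 2 - a ^ 2 = 4 * (k:ℝ) * ℓ := by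
      rw [ha, hbval]; push_cast; ring
    have hεabs : |ε| = 1 := by
      rcases Int.even_or_odd ((k:ℤ) - ℓ) with h | h
      · rw [hεdef, h.neg_one_zpow]; norm_num
      · rw [hεdef, h.neg_one_zpow]; norm_num
    have hE : (2 * ε / (a ^ 2 * π ^ 2) - 2 * ε / (b ^ 2 * π ^ 2)) / 2
        = ε * (1 / (a ^ 2 * π ^ 2) - 1 / (b ^ 2 * π ^ 2)) := by ring
    have hDval : 1 / (a ^ 2 * π ^ 2) - 1 / (b ^ 2 * π ^ 2)
        = (b ^ 2 - a ^ 2) / (a ^ 2 * b ^ 2 * π ^ 2) := by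
      field_simp
    have hD0 : 0 ≤ 1 / (a ^ 2 * π ^ 2) - 1 / (b ^ 2 * π ^ 2) := by
      rw [hDval, hdiff]
      positivity
    rw [hE, abs_mul, hεabs, one_mul, abs_of_nonneg hD0, hDval, hdiff]
    calc C / (k:ℝ) ^ 3 ≤ (1 / ((ℓ:ℝ) ^ 3 * π ^ 2)) / (k:ℝ) ^ 3 := by
          gcongr
          exact min_le_left _ _
      _ ≤ 4 * (k:ℝ) * ℓ / (a ^ 2 * b ^ 2 * π ^ 2) := by
          rw [div_div, div_le_div_iff₀ (by positivity) (by positivity)]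
          have hab : a ^ 2 * b ^ 2 ≤ 4 * (k:ℝ) ^ 4 * (ℓ:ℝ) ^ 4 :=
            calc a ^ 2 * b ^ 2 ≤ ((k:ℝ) ^ 2 * ℓ ^ 2) * (4 * (k:ℝ) ^ 2 * ℓ ^ 2) :=
                  mul_le_mul ha2 hb2 (by positivity) (by positivity)
              _ = 4 * (k:ℝ) ^ 4 * ℓ ^ 4 := by ring
          calc 1 * (a ^ 2 * b ^ 2 * π ^ 2) = a ^ 2 * b ^ 2 * π ^ 2 := by ring
            _ ≤ 4 * (k:ℝ) ^ 4 * (ℓ:ℝ) ^ 4 * π ^ 2 :=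
                mul_le_mul_of_nonneg_right hab hπ0.le
            _ = 4 * ↑k * ↑ℓ * ((ℓ:ℝ) ^ 3 * π ^ 2 * (k:ℝ) ^ 3) := by ring
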